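/- Let f, g, h, k be complex numbers and R : ℕ → ℂ satisfy R 0 = h, R 1 = k, R (n+2) = f * R (n+1) + g * R n. Define S n = ∑_{i=1}^{n} (k^2 - g*h^2 - f*h*k) * (-g)^(i-1). Then for all n ≥ 1: (f^2 - g^2 + 2*g - 1) * ∑_{i=1}^{n} (R i)^2 = (R (n+1))^2 - k^2 - g^2 * ((R n)^2 - h^2) + 2 * g * S n. -/

import Mathlib

theorem stmt_16 (f g h k : ℂ) (R : ℕ → ℂ)
    (h0 : R 0 = h) (h1 : R 1 = k)
    (hrec : ∀ n, R (n + 2) = f * R (n + 1) + g * R n) :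
    ∀ n : ℕ, 1 ≤ n →
      (f^2 - g^2 + 2*g - 1) * ∑ i ∈ Finset.Icc 1 n, (R i)^2
        = (R (n+1))^2 - k^2 - g^2 * ((R n)^2 - h^2)
          + 2 * g * ∑ i ∈ Finset.Icc 1 n, (k^2 - g*h^2 - f*h*k) * (-g)^(i-1) := by
  have aux : ∀ n : ℕ, (R (n+1))^2 - f * R (n+1) * R n - g * (R n)^2
      = (k^2 - g*h^2 - f*h*k) * (-g)^n := by
    intro n
    induction n with
    | zero => simp [h0, h1]; ring
    | succ m ih =>
      rw [show m + 1 + 1 = m + 2 from rfl, hrec m]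
      have : f * R (m + 1) + g * R m = f * R (m+1) + g * R m := rfl
      calc (f * R (m + 1) + g * R m) ^ 2 - f * (f * R (m + 1) + g * R m) * R (m + 1)
            - g * R (m + 1) ^ 2
          = -g * ((R (m+1))^2 - f * R (m+1) * R m - g * (R m)^2) := by ring
        _ = -g * ((k^2 - g*h^2 - f*h*k) * (-g)^m) := by rw [ih]
        _ = (k^2 - g*h^2 - f*h*k) * (-g)^(m+1) := by ring
  intro n hn
  induction n with
  | zero => omega
  | succ m ih =>
    rcases Nat.eq_zero_or_pos m with hm | hm
    · subst hm
      simp [h0, h1, hrec 0]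
      ring
    · have h1m : 1 ≤ m := hm
      rw [Finset.sum_Icc_succ_top (by omega : 1 ≤ m + 1),
          Finset.sum_Icc_succ_top (by omega : 1 ≤ m + 1)]
      have key := aux m
      rw [mul_add, ih h1m, hrec m]
      simp only [Nat.add_sub_cancel]
      linear_combination 2*g*key
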